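/- Any q-ary code of length n, constant weight w, minimum distance at least 2w, and constant composition w̄ = [w_1,...,w_{q-1}] (with all w_i > 0 and Σ w_i = w ≥ 1) has size at most ⌊n/w⌋, and this bound is attained. -/

import Mathlib

open Finset

namespace Stmt5Aux

/-- partial sums of the composition -/
def S (wb : ℕ → ℕ) (i : ℕ) : ℕ := ∑ t ∈ Finset.Icc 1 i, wb t

lemma S_mono (wb : ℕ → ℕ) : Monotone (S wb) := fun a b hab =>
  Finset.sum_le_sum_of_subset (Finset.Icc_subset_Icc_right hab)

lemma S_zero (wb : ℕ → ℕ) : S wb 0 = 0 := by simp [S]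

lemma S_succ (wb : ℕ → ℕ) (i : ℕ) (hi : 1 ≤ i) :
    S wb i = S wb (i - 1) + wb i := by
  obtain ⟨j, rfl⟩ : ∃ j, i = j + 1 := ⟨i - 1, by omega⟩
  simp [S, Finset.sum_Icc_succ_top (by omega : 1 ≤ j + 1)]

/-- the value placed at position j -/
noncomputable def g (wb : ℕ → ℕ) (j : ℕ) : ℕ := sInf {i | j < S wb i}

lemma g_spec (wb : ℕ → ℕ) (q : ℕ) (hq : 2 ≤ q) (j : ℕ) (hj : j < S wb (q - 1)) :
    1 ≤ g wb j ∧ g wb j ≤ q - 1 ∧ S wb (g wb j - 1) ≤ j ∧ j < S wb (g wb j) := by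
  have hne : {i | j < S wb i}.Nonempty := ⟨q - 1, hj⟩
  have hmem := Nat.sInf_mem hne
  have hle : g wb j ≤ q - 1 := Nat.sInf_le hj
  have h1 : 1 ≤ g wb j := by
    by_contra h
    have h0 : g wb j = 0 := by omega
    have : j < S wb (g wb j) := hmem
    rw [h0, S_zero] at this
    omega
  refine ⟨h1, hle, ?_, hmem⟩
  by_contra h
  push_neg at h
  have hh : g wb j - 1 ∈ {i | j < S wb i} := h
  have hg : g wb j ≤ g wb j - 1 := Nat.sInf_le hh
  omega

lemma g_eq_iff (wb : ℕ → ℕ) (q : ℕ) (hq : 2 ≤ q) (j : ℕ) (hj : j < S wb (q - 1))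
    (i : ℕ) (hi1 : 1 ≤ i) (hi2 : i ≤ q - 1) :
    g wb j = i ↔ S wb (i - 1) ≤ j ∧ j < S wb i := by
  obtain ⟨h1, h2, h3, h4⟩ := g_spec wb q hq j hj
  constructor
  · rintro rfl; exact ⟨h3, h4⟩
  · rintro ⟨ha, hb⟩
    have hle : g wb j ≤ i := Nat.sInf_le hb
    by_contra hne
    have hlt : g wb j ≤ i - 1 := by omega
    have := S_mono wb hlt
    omega

end Stmt5Aux

namespace Stmt5Aux

lemma count_g (wb : ℕ → ℕ) (q : ℕ) (hq : 2 ≤ q) (i : ℕ) (hi1 : 1 ≤ i) (hi2 : i ≤ q - 1) :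
    ((Finset.range (S wb (q - 1))).filter (fun j => g wb j = i)).card = wb i := by
  have he : (Finset.range (S wb (q - 1))).filter (fun j => g wb j = i)
      = Finset.Ico (S wb (i - 1)) (S wb i) := by
    ext j
    simp only [Finset.mem_filter, Finset.mem_range, Finset.mem_Ico]
    constructor
    · rintro ⟨hj, hgj⟩
      exact (g_eq_iff wb q hq j hj i hi1 hi2).1 hgj
    · intro hj
      have hjw : j < S wb (q - 1) := lt_of_lt_of_le hj.2 (S_mono wb hi2)
      exact ⟨hjw, (g_eq_iff wb q hq j hjw i hi1 hi2).2 hj⟩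
  rw [he, Nat.card_Ico]
  have := S_succ wb i hi1
  omega

lemma cast_ne_zero (q i : ℕ) (hq : 2 ≤ q) (hi1 : 1 ≤ i) (hi2 : i ≤ q - 1) :
    (i : ZMod q) ≠ 0 := by
  haveI : NeZero q := ⟨by omega⟩
  intro h
  have hd := (ZMod.natCast_eq_zero_iff i q).1 h
  have := Nat.le_of_dvd (by omega) hd
  omega

lemma cast_inj (q i i' : ℕ) (hq : 2 ≤ q) (hi : i ≤ q - 1) (hi' : i' ≤ q - 1)
    (h : (i : ZMod q) = (i' : ZMod q)) : i = i' := by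
  haveI : NeZero q := ⟨by omega⟩
  have h1 := ZMod.val_cast_of_lt (a := i) (by omega : i < q)
  have h2 := ZMod.val_cast_of_lt (a := i') (by omega : i' < q)
  rw [← h1, ← h2, h]

lemma card_filter_fin (n : ℕ) (P : ℕ → Prop) [DecidablePred P] :
    (Finset.univ.filter (fun x : Fin n => P (x : ℕ))).card
      = ((Finset.range n).filter P).card := by
  rw [← Finset.card_image_of_injective _ Fin.val_injective]
  congr 1
  ext j
  simp only [Finset.mem_image, Finset.mem_filter, Finset.mem_univ, true_and,
    Finset.mem_range]
  constructor
  · rintro ⟨x, hx, rfl⟩; exact ⟨x.isLt, hx⟩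
  · rintro ⟨hj, hP⟩; exact ⟨⟨j, hj⟩, hP, rfl⟩

/-- the k-th codeword: block [k*w, k*w+w) carries the pattern g -/
noncomputable def cw (q n w : ℕ) (wb : ℕ → ℕ) (k : ℕ) : Fin n → ZMod q :=
  fun x => if k * w ≤ (x : ℕ) ∧ (x : ℕ) < k * w + w then ((g wb ((x : ℕ) - k * w) : ℕ) : ZMod q) else 0

lemma cw_out (q n w : ℕ) (wb : ℕ → ℕ) (k : ℕ) (x : Fin n)
    (hb : ¬(k * w ≤ (x : ℕ) ∧ (x : ℕ) < k * w + w)) : cw q n w wb k x = 0 := by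
  simp [cw, hb]

lemma cw_in (q n w : ℕ) (wb : ℕ → ℕ) (hq : 2 ≤ q) (hwS : S wb (q - 1) = w) (k : ℕ) (x : Fin n)
    (hb : k * w ≤ (x : ℕ) ∧ (x : ℕ) < k * w + w) : cw q n w wb k x ≠ 0 := by
  have hjw : (x : ℕ) - k * w < S wb (q - 1) := by omega
  obtain ⟨hg1, hg2, -, -⟩ := g_spec wb q hq _ hjw
  simp only [cw, if_pos hb]
  exact cast_ne_zero q _ hq hg1 hg2

lemma blocks_disj (w k k' : ℕ) (hw : 1 ≤ w) (hkk : k ≠ k') (x : ℕ) :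
    ¬(k * w ≤ x ∧ x < k * w + w ∧ k' * w ≤ x ∧ x < k' * w + w) := by
  rcases Nat.lt_or_ge k k' with h | h
  · have h2 : k * w + w ≤ k' * w := by
      have := Nat.mul_le_mul_right w (Nat.succ_le_of_lt h)
      simpa [Nat.succ_mul] using this
    omega
  · have h' : k' < k := by omega
    have h2 : k' * w + w ≤ k * w := by
      have := Nat.mul_le_mul_right w (Nat.succ_le_of_lt h')
      simpa [Nat.succ_mul] using this
    omega

lemma cw_wt (q n w : ℕ) (wb : ℕ → ℕ) (hq : 2 ≤ q) (hwS : S wb (q - 1) = w)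
    (k : ℕ) (hkn : k * w + w ≤ n) :
    (Finset.univ.filter (fun x : Fin n => cw q n w wb k x ≠ 0)).card = w := by
  have hfe : (Finset.univ.filter (fun x : Fin n => cw q n w wb k x ≠ 0))
      = Finset.univ.filter (fun x : Fin n => k * w ≤ (x : ℕ) ∧ (x : ℕ) < k * w + w) := by
    ext x
    simp only [Finset.mem_filter, Finset.mem_univ, true_and]
    constructor
    · intro hc
      by_contra hb
      exact hc (cw_out q n w wb k x hb)
    · intro hb
      exact cw_in q n w wb hq hwS k x hb
  rw [hfe, card_filter_fin n (fun y => k * w ≤ y ∧ y < k * w + w)]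
  have : (Finset.range n).filter (fun y => k * w ≤ y ∧ y < k * w + w)
      = Finset.Ico (k * w) (k * w + w) := by
    ext j
    simp only [Finset.mem_filter, Finset.mem_range, Finset.mem_Ico]
    omega
  rw [this, Nat.card_Ico]
  omega

lemma cw_comp (q n w : ℕ) (wb : ℕ → ℕ) (hq : 2 ≤ q) (hwS : S wb (q - 1) = w)
    (k : ℕ) (hkn : k * w + w ≤ n) (i : ℕ) (hi1 : 1 ≤ i) (hi2 : i ≤ q - 1) :
    (Finset.univ.filter (fun x : Fin n => cw q n w wb k x = (i : ZMod q))).card = wb i := by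
  have hfe : (Finset.univ.filter (fun x : Fin n => cw q n w wb k x = (i : ZMod q)))
      = Finset.univ.filter (fun x : Fin n =>
          k * w ≤ (x : ℕ) ∧ (x : ℕ) < k * w + w ∧ g wb ((x : ℕ) - k * w) = i) := by
    ext x
    simp only [Finset.mem_filter, Finset.mem_univ, true_and]; simp only [cw]
    split_ifs with hb
    · have hjw : (x : ℕ) - k * w < S wb (q - 1) := by omega
      obtain ⟨hg1, hg2, -, -⟩ := g_spec wb q hq _ hjw
      constructor
      · intro hc
        exact ⟨hb.1, hb.2, cast_inj q _ _ hq hg2 hi2 hc⟩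
      · rintro ⟨-, -, hgi⟩; rw [hgi]
    · constructor
      · intro hc
        exact absurd hc.symm (cast_ne_zero q i hq hi1 hi2)
      · rintro ⟨h1, h2, -⟩; exact absurd ⟨h1, h2⟩ hb
  rw [hfe, card_filter_fin n (fun y => k * w ≤ y ∧ y < k * w + w ∧ g wb (y - k * w) = i)]
  rw [← count_g wb q hq i hi1 hi2, hwS]
  refine Finset.card_bij' (fun y _ => y - k * w) (fun y _ => y + k * w) ?_ ?_ ?_ ?_
  · intro a ha
    simp only [Finset.mem_filter, Finset.mem_range] at ha ⊢
    exact ⟨by omega, ha.2.2.2⟩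
  · intro a ha
    simp only [Finset.mem_filter, Finset.mem_range] at ha ⊢
    refine ⟨by omega, by omega, by omega, ?_⟩
    have : a + k * w - k * w = a := by omega
    rw [this]; exact ha.2
  · intro a ha
    simp only [Finset.mem_filter, Finset.mem_range] at ha
    show a - k * w + k * w = a
    omega
  · intro a ha
    show a + k * w - k * w = a
    omega

end Stmt5Aux

/-- Hamming distance between two words. -/
def hdist {n q : ℕ} (u v : Fin n → ZMod q) : ℕ :=
  (univ.filter (fun x => u x ≠ v x)).card

/-- Hamming weight of a word. -/
def wt {n q : ℕ} (u : Fin n → ZMod q) : ℕ :=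
  (univ.filter (fun x => u x ≠ 0)).card

theorem stmt5 (q n : ℕ) (hq : 2 ≤ q) (wb : ℕ → ℕ)
    (hpos : ∀ i, 1 ≤ i → i ≤ q - 1 → 1 ≤ wb i)
    (w : ℕ) (hw : w = ∑ i ∈ Finset.Icc 1 (q - 1), wb i) (hw1 : 1 ≤ w) :
    (∀ C : Finset (Fin n → ZMod q),
      (∀ u ∈ C, wt u = w) →
      (∀ u ∈ C, ∀ i, 1 ≤ i → i ≤ q - 1 →
        (univ.filter (fun x => u x = (i : ZMod q))).card = wb i) →
      (∀ u ∈ C, ∀ v ∈ C, u ≠ v → 2 * w ≤ hdist u v) →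
      C.card ≤ n / w) ∧
    (∃ C : Finset (Fin n → ZMod q),
      (∀ u ∈ C, wt u = w) ∧
      (∀ u ∈ C, ∀ i, 1 ≤ i → i ≤ q - 1 →
        (univ.filter (fun x => u x = (i : ZMod q))).card = wb i) ∧
      (∀ u ∈ C, ∀ v ∈ C, u ≠ v → 2 * w ≤ hdist u v) ∧
      C.card = n / w) := by
  classical
  have hwS : Stmt5Aux.S wb (q - 1) = w := hw.symm
  constructor
  · -- upper bound
    intro C hwt _ hd
    set supp : (Fin n → ZMod q) → Finset (Fin n) :=
      fun u => univ.filter (fun x => u x ≠ 0) with hsupp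
    have hdisj : ∀ u ∈ C, ∀ v ∈ C, u ≠ v → Disjoint (supp u) (supp v) := by
      intro u hu v hv huv
      by_contra hnd
      obtain ⟨x, hxu, hxv⟩ := Finset.not_disjoint_iff.1 hnd
      have hsub : (univ.filter (fun x => u x ≠ v x)) ⊆ supp u ∪ supp v := by
        intro y hy
        simp only [Finset.mem_filter, Finset.mem_univ, true_and] at hy
        simp only [hsupp, Finset.mem_union, Finset.mem_filter, Finset.mem_univ, true_and]
        by_contra hc
        push_neg at hc
        exact hy (hc.1.trans hc.2.symm)
      have h1 : (supp u ∪ supp v).card + (supp u ∩ supp v).card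
          = (supp u).card + (supp v).card := Finset.card_union_add_card_inter _ _
      have h2 : 1 ≤ (supp u ∩ supp v).card :=
        Finset.card_pos.2 ⟨x, Finset.mem_inter.2 ⟨hxu, hxv⟩⟩
      have h3 : hdist u v ≤ (supp u ∪ supp v).card := Finset.card_le_card hsub
      have h4 := hd u hu v hv huv
      have h5 : (supp u).card = w := hwt u hu
      have h6 : (supp v).card = w := hwt v hv
      omega
    have hcard : (C.biUnion supp).card = ∑ u ∈ C, (supp u).card :=
      Finset.card_biUnion hdisj
    have hsum : ∑ u ∈ C, (supp u).card = C.card * w := by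
      rw [show (∑ u ∈ C, (supp u).card) = ∑ _u ∈ C, w from
        Finset.sum_congr rfl (fun u hu => hwt u hu), Finset.sum_const, smul_eq_mul]
    have hle : (C.biUnion supp).card ≤ n := by
      have := Finset.card_le_univ (C.biUnion supp)
      simpa using this
    rw [Nat.le_div_iff_mul_le (by omega : 0 < w)]
    omega
  · -- construction
    have hkn : ∀ k, k < n / w → k * w + w ≤ n := by
      intro k hk
      have h1 : (k + 1) * w ≤ (n / w) * w := Nat.mul_le_mul_right w hk
      have h2 : (n / w) * w ≤ n := Nat.div_mul_le_self n w
      have : (k + 1) * w = k * w + w := by ring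
      omega
    refine ⟨(Finset.range (n / w)).image (Stmt5Aux.cw q n w wb), ?_, ?_, ?_, ?_⟩
    · intro u hu
      obtain ⟨k, hk, rfl⟩ := Finset.mem_image.1 hu
      rw [Finset.mem_range] at hk
      exact Stmt5Aux.cw_wt q n w wb hq hwS k (hkn k hk)
    · intro u hu i hi1 hi2
      obtain ⟨k, hk, rfl⟩ := Finset.mem_image.1 hu
      rw [Finset.mem_range] at hk
      exact Stmt5Aux.cw_comp q n w wb hq hwS k (hkn k hk) i hi1 hi2
    · intro u hu v hv huv
      obtain ⟨k, hk, rfl⟩ := Finset.mem_image.1 hu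
      obtain ⟨k', hk', rfl⟩ := Finset.mem_image.1 hv
      rw [Finset.mem_range] at hk hk'
      have hkk : k ≠ k' := fun h => huv (by rw [h])
      set A : Finset (Fin n) :=
        univ.filter (fun x : Fin n => k * w ≤ (x : ℕ) ∧ (x : ℕ) < k * w + w) with hA
      set B : Finset (Fin n) :=
        univ.filter (fun x : Fin n => k' * w ≤ (x : ℕ) ∧ (x : ℕ) < k' * w + w) with hB
      have hcardA : A.card = w := by
        rw [hA, Stmt5Aux.card_filter_fin n (fun y => k * w ≤ y ∧ y < k * w + w)]
        have he : (Finset.range n).filter (fun y => k * w ≤ y ∧ y < k * w + w)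
            = Finset.Ico (k * w) (k * w + w) := by
          ext j
          simp only [Finset.mem_filter, Finset.mem_range, Finset.mem_Ico]
          have := hkn k hk
          omega
        rw [he, Nat.card_Ico]; omega
      have hcardB : B.card = w := by
        rw [hB, Stmt5Aux.card_filter_fin n (fun y => k' * w ≤ y ∧ y < k' * w + w)]
        have he : (Finset.range n).filter (fun y => k' * w ≤ y ∧ y < k' * w + w)
            = Finset.Ico (k' * w) (k' * w + w) := by
          ext j
          simp only [Finset.mem_filter, Finset.mem_range, Finset.mem_Ico]
          have := hkn k' hk'
          omega
        rw [he, Nat.card_Ico]; omega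
      have hABdisj : Disjoint A B := by
        rw [Finset.disjoint_left]
        intro x hxA hxB
        simp only [hA, hB, Finset.mem_filter, Finset.mem_univ, true_and] at hxA hxB
        exact Stmt5Aux.blocks_disj w k k' hw1 hkk (x : ℕ)
          ⟨hxA.1, hxA.2, hxB.1, hxB.2⟩
      have hsub : A ∪ B ⊆ univ.filter
          (fun x => Stmt5Aux.cw q n w wb k x ≠ Stmt5Aux.cw q n w wb k' x) := by
        intro x hx
        simp only [Finset.mem_union, hA, hB, Finset.mem_filter, Finset.mem_univ,
          true_and] at hx ⊢
        rcases hx with hx | hx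
        · have h1 := Stmt5Aux.cw_in q n w wb hq hwS k x hx
          have h2 : Stmt5Aux.cw q n w wb k' x = 0 :=
            Stmt5Aux.cw_out q n w wb k' x (fun hc =>
              Stmt5Aux.blocks_disj w k k' hw1 hkk (x : ℕ) ⟨hx.1, hx.2, hc.1, hc.2⟩)
          rw [h2]; exact h1
        · have h1 := Stmt5Aux.cw_in q n w wb hq hwS k' x hx
          have h2 : Stmt5Aux.cw q n w wb k x = 0 :=
            Stmt5Aux.cw_out q n w wb k x (fun hc =>
              Stmt5Aux.blocks_disj w k k' hw1 hkk (x : ℕ) ⟨hc.1, hc.2, hx.1, hx.2⟩)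
          rw [h2]; exact fun h => h1 h.symm
      have := Finset.card_le_card hsub
      rw [Finset.card_union_of_disjoint hABdisj, hcardA, hcardB] at this
      unfold hdist
      omega
    · rw [Finset.card_image_of_injOn, Finset.card_range]
      intro k hk k' hk' hcw
      simp only [Finset.coe_range, Set.mem_Iio] at hk hk'
      by_contra hkk
      have hx0 : k * w < n := by have := hkn k hk; omega
      set x0 : Fin n := ⟨k * w, hx0⟩ with hx0def
      have hval : (x0 : ℕ) = k * w := rfl
      have h1 := Stmt5Aux.cw_in q n w wb hq hwS k x0 (by rw [hval]; omega)
      have h2 : Stmt5Aux.cw q n w wb k' x0 = 0 :=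
        Stmt5Aux.cw_out q n w wb k' x0 (fun hc =>
          Stmt5Aux.blocks_disj w k k' hw1 hkk (x0 : ℕ)
            ⟨by omega, by omega, hc.1, hc.2⟩)
      rw [hcw, h2] at h1
      exact h1 rfl
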